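/- Let M, R > 0, γ ∈ (0,1), and let G ∈ L²(ℝ) be supported in [-R-γR,-R] with ‖G‖_{L²} ≤ M. Define the radial function v₀ on ℝ³ by v₀(x) = (1/|x|)∫_{-|x|}^{|x|} G(s)ds. Then ∫_{ℝ³} |v₀(x)|⁶ dx ≤ C γ³ M⁶ for an absolute constant C. -/

import Mathlib

open MeasureTheory Real Set Metric

lemma cs_bound {M R γ : ℝ} (hM : 0 < M) (hR : 0 < R) (hγ : 0 < γ)
    {G : ℝ → ℝ} (hG2 : MemLp G 2 (volume : Measure ℝ))
    (hsupp : ∀ s : ℝ, s ∉ Icc (-R - γ * R) (-R) → G s = 0)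
    (hM2 : (∫ s : ℝ, (G s) ^ 2) ≤ M ^ 2) (a b : ℝ) :
    |∫ s in Ioc a b, G s| ≤ Real.sqrt (γ * R) * M := by
  set S : Set ℝ := Icc (-R - γ * R) (-R) with hS
  have hγR : 0 ≤ γ * R := by positivity
  have hvol : (volume S).toReal = γ * R := by
    rw [hS, Real.volume_Icc, ENNReal.toReal_ofReal (by linarith)]; ring
  haveI : IsFiniteMeasure (volume.restrict S) := by
    constructor
    rw [Measure.restrict_apply_univ, hS, Real.volume_Icc]
    exact ENNReal.ofReal_lt_top
  have hGS : IntegrableOn G S volume := (hG2.restrict S).integrable one_le_two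
  have hGeq : S.indicator G = G := by
    funext s
    by_cases h : s ∈ S
    · simp [h]
    · simp [h, hsupp s h]
  have hGint : Integrable G volume := by
    rw [← hGeq]; exact hGS.integrable_indicator measurableSet_Icc
  have habs_eq : S.indicator (fun s => |G s|) = fun s => |G s| := by
    funext s
    by_cases h : s ∈ S
    · simp [h]
    · simp [h, hsupp s h]
  have h1 : |∫ s in Ioc a b, G s| ≤ ∫ s, |G s| := by
    refine le_trans ?_ (setIntegral_le_integral (s := Ioc a b) hGint.abs
      (ae_of_all _ fun s => abs_nonneg _))
    exact (norm_integral_le_integral_norm _ : ‖∫ s in Ioc a b, G s‖ ≤ _)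
  have h2 : (∫ s, |G s|) = ∫ s in S, |G s| := by
    rw [← integral_indicator measurableSet_Icc, habs_eq]
  have habsmem : MemLp (fun s => |G s|) (ENNReal.ofReal 2) (volume.restrict S) := by
    have h := (hG2.restrict S).norm
    simp only [Real.norm_eq_abs] at h
    convert h using 2
    norm_num
  have honemem : MemLp (fun _ : ℝ => (1:ℝ)) (ENNReal.ofReal 2) (volume.restrict S) :=
    memLp_const 1
  have hCS : (∫ s in S, |G s|) ≤
      (∫ s in S, |G s| ^ (2:ℝ)) ^ ((1:ℝ)/2) * (∫ s in S, (1:ℝ) ^ (2:ℝ)) ^ ((1:ℝ)/2) := by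
    have := integral_mul_le_Lp_mul_Lq_of_nonneg (μ := volume.restrict S)
      (f := fun s => |G s|) (g := fun _ => (1:ℝ))
      Real.HolderConjugate.two_two
      (ae_of_all _ fun s => abs_nonneg _) (ae_of_all _ fun _ => zero_le_one)
      habsmem honemem
    simpa using this
  have hrpow2 : ∀ y : ℝ, |y| ^ (2:ℝ) = y ^ 2 := fun y => by
    rw [show (2:ℝ) = ((2:ℕ):ℝ) by norm_num, Real.rpow_natCast, sq_abs]
  have hsq_le : (∫ s in S, |G s| ^ (2:ℝ)) ≤ M ^ 2 := by
    simp only [hrpow2]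
    exact le_trans (setIntegral_le_integral hG2.integrable_sq
      (ae_of_all _ fun s => sq_nonneg _)) hM2
  have hfac1 : (∫ s in S, |G s| ^ (2:ℝ)) ^ ((1:ℝ)/2) ≤ M := by
    have hnn : 0 ≤ ∫ s in S, |G s| ^ (2:ℝ) :=
      integral_nonneg fun s => Real.rpow_nonneg (abs_nonneg _) _
    calc (∫ s in S, |G s| ^ (2:ℝ)) ^ ((1:ℝ)/2)
        ≤ (M ^ 2) ^ ((1:ℝ)/2) := Real.rpow_le_rpow hnn hsq_le (by norm_num)
      _ = M := by
          rw [← Real.sqrt_eq_rpow, Real.sqrt_sq hM.le]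
  have hfac2 : (∫ s in S, (1:ℝ) ^ (2:ℝ)) ^ ((1:ℝ)/2) = Real.sqrt (γ * R) := by
    simp only [Real.one_rpow]
    rw [setIntegral_const, smul_eq_mul, mul_one, measureReal_def, hvol, Real.sqrt_eq_rpow]
  calc |∫ s in Ioc a b, G s| ≤ ∫ s in S, |G s| := h2 ▸ h1
    _ ≤ (∫ s in S, |G s| ^ (2:ℝ)) ^ ((1:ℝ)/2) * (∫ s in S, (1:ℝ) ^ (2:ℝ)) ^ ((1:ℝ)/2) := hCS
    _ ≤ M * Real.sqrt (γ * R) := by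
        rw [hfac2]
        exact mul_le_mul_of_nonneg_right hfac1 (Real.sqrt_nonneg _)
    _ = Real.sqrt (γ * R) * M := mul_comm _ _

theorem stmt_11 :
    ∃ C : ℝ, 0 < C ∧
      ∀ (M R γ : ℝ), 0 < M → 0 < R → 0 < γ → γ < 1 →
        ∀ G : ℝ → ℝ, MemLp G 2 (volume : Measure ℝ) →
          (∀ s : ℝ, s ∉ Icc (-R - γ * R) (-R) → G s = 0) →
          (∫ s : ℝ, (G s) ^ 2) ≤ M ^ 2 →
          (∫ x : EuclideanSpace ℝ (Fin 3),
              |(1 / ‖x‖) * ∫ s in Ioc (-‖x‖) ‖x‖, G s| ^ 6)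
            ≤ C * γ ^ 3 * M ^ 6 := by
  set V : ℝ := (volume (ball (0 : EuclideanSpace ℝ (Fin 3)) 1)).toReal with hV
  have hVpos : 0 < V :=
    ENNReal.toReal_pos (measure_ball_pos volume 0 one_pos).ne' measure_ball_lt_top.ne
  refine ⟨2 * V, by positivity, ?_⟩
  intro M R γ hM hR hγ hγ1 G hG2 hsupp hM2
  have hγR : 0 ≤ γ * R := by positivity
  set c : ℝ := γ ^ 3 * R ^ 3 * M ^ 6 with hc
  have hcpos : 0 < c := by positivity
  set g : EuclideanSpace ℝ (Fin 3) → ℝ := fun x => c / max ‖x‖ R ^ 6 with hg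
  have hmaxpos : ∀ y : ℝ, 0 < max y R := fun y => lt_max_iff.2 (Or.inr hR)
  -- pointwise bound
  have hpt : ∀ x : EuclideanSpace ℝ (Fin 3),
      |(1 / ‖x‖) * ∫ s in Ioc (-‖x‖) ‖x‖, G s| ^ 6 ≤ g x := by
    intro x
    rcases lt_or_ge ‖x‖ R with h | h
    · have hz : (∫ s in Ioc (-‖x‖) ‖x‖, G s) = 0 := by
        refine setIntegral_eq_zero_of_forall_eq_zero fun s hs => hsupp s ?_
        intro hmem
        have h1 := hs.1
        have h2 := hmem.2
        linarith
      rw [hz]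
      simp only [mul_zero, abs_zero]
      have : (0:ℝ) ≤ g x := by
        have := (hmaxpos ‖x‖)
        positivity
      simpa using this
    · have hr : 0 < ‖x‖ := lt_of_lt_of_le hR h
      have hb := cs_bound hM hR hγ hG2 hsupp hM2 (-‖x‖) ‖x‖
      have hmax : max ‖x‖ R = ‖x‖ := max_eq_left h
      have habs : |(1 / ‖x‖) * ∫ s in Ioc (-‖x‖) ‖x‖, G s|
          = |∫ s in Ioc (-‖x‖) ‖x‖, G s| / ‖x‖ := by
        rw [abs_mul, abs_of_nonneg (by positivity : (0:ℝ) ≤ 1 / ‖x‖), one_div,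
          inv_mul_eq_div]
      rw [habs, div_pow]
      simp only [hg, hmax]
      have hnum : |∫ s in Ioc (-‖x‖) ‖x‖, G s| ^ 6 ≤ c := by
        calc |∫ s in Ioc (-‖x‖) ‖x‖, G s| ^ 6
            ≤ (Real.sqrt (γ * R) * M) ^ 6 := by
              exact pow_le_pow_left₀ (abs_nonneg _) hb 6
          _ = (Real.sqrt (γ * R) ^ 2) ^ 3 * M ^ 6 := by ring
          _ = c := by rw [Real.sq_sqrt hγR, hc]; ring
      gcongr
  -- integrability of g
  have hgcont : Continuous g := by
    refine continuous_const.div (((continuous_norm.max continuous_const).pow 6)) ?_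
    intro x
    exact pow_ne_zero _ (hmaxpos ‖x‖).ne'
  have hgint : Integrable g (volume : Measure (EuclideanSpace ℝ (Fin 3))) := by
    have hdim : ((Module.finrank ℝ (EuclideanSpace ℝ (Fin 3)) : ℝ)) < 6 := by
      simp [finrank_euclideanSpace_fin]; norm_num
    have base : Integrable (fun x : EuclideanSpace ℝ (Fin 3) => (1 + ‖x‖) ^ (-(6:ℝ)))
        (volume : Measure (EuclideanSpace ℝ (Fin 3))) := integrable_one_add_norm hdim
    refine (base.const_mul (c * (1 + 1/R) ^ 6)).mono' hgcont.aestronglyMeasurable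
      (ae_of_all _ fun x => ?_)
    have h1x : (0:ℝ) < 1 + ‖x‖ := by positivity
    have hrp : (1 + ‖x‖) ^ (-(6:ℝ)) = ((1 + ‖x‖) ^ (6:ℕ))⁻¹ := by
      rw [Real.rpow_neg h1x.le, ← Real.rpow_natCast (1 + ‖x‖) 6]
      norm_num
    rw [Real.norm_eq_abs, abs_of_nonneg (by have := hmaxpos ‖x‖; positivity : (0:ℝ) ≤ g x)]
    rw [hrp]
    have hkey : 1 + ‖x‖ ≤ (1 + 1/R) * max ‖x‖ R := by
      have h1 : (1:ℝ) ≤ max ‖x‖ R / R := (one_le_div hR).2 (le_max_right _ _)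
      have h2 : ‖x‖ ≤ max ‖x‖ R := le_max_left _ _
      calc 1 + ‖x‖ ≤ max ‖x‖ R / R + max ‖x‖ R := by linarith
        _ = (1 + 1/R) * max ‖x‖ R := by ring
    have hpow : (1 + ‖x‖) ^ 6 ≤ (1 + 1/R) ^ 6 * max ‖x‖ R ^ 6 := by
      calc (1 + ‖x‖) ^ 6 ≤ ((1 + 1/R) * max ‖x‖ R) ^ 6 :=
            pow_le_pow_left₀ h1x.le hkey 6
        _ = _ := by rw [mul_pow]
    rw [← div_eq_mul_inv, hg]
    rw [div_le_div_iff₀ (pow_pos (hmaxpos ‖x‖) 6) (pow_pos h1x 6)]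
    calc c * (1 + ‖x‖) ^ 6 ≤ c * ((1 + 1/R) ^ 6 * max ‖x‖ R ^ 6) :=
          mul_le_mul_of_nonneg_left hpow hcpos.le
      _ = c * (1 + 1/R) ^ 6 * max ‖x‖ R ^ 6 := by ring
  -- value of ∫ g
  have hrad := integral_fun_norm_addHaar (volume : Measure (EuclideanSpace ℝ (Fin 3)))
    (fun y => c / max y R ^ 6)
  rw [finrank_euclideanSpace_fin] at hrad
  have hJ1 : (∫ y in Ioc (0:ℝ) R, y ^ 2 * (c / max y R ^ 6)) = c / (3 * R ^ 3) := by
    rw [setIntegral_congr_fun measurableSet_Ioc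
      (fun y hy => by
        show y ^ 2 * (c / max y R ^ 6) = y ^ 2 * (c / R ^ 6)
        rw [max_eq_right hy.2] : EqOn (fun y => y ^ 2 * (c / max y R ^ 6))
        (fun y => y ^ 2 * (c / R ^ 6)) (Ioc 0 R))]
    rw [integral_mul_const, ← intervalIntegral.integral_of_le hR.le,
      integral_pow]
    field_simp
    ring_nf
    try simp
  have hJ2 : (∫ y in Ioi R, y ^ 2 * (c / max y R ^ 6)) = c / (3 * R ^ 3) := by
    rw [setIntegral_congr_fun measurableSet_Ioi
      (fun y hy => by
        have hy0 : (0:ℝ) < y := lt_trans hR hy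
        show y ^ 2 * (c / max y R ^ 6) = c * y ^ (-(4:ℝ))
        rw [max_eq_left (le_of_lt hy), Real.rpow_neg hy0.le,
          show ((4:ℝ)) = ((4:ℕ):ℝ) by norm_num, Real.rpow_natCast]
        field_simp
        try simp : EqOn (fun y => y ^ 2 * (c / max y R ^ 6))
        (fun y => c * y ^ (-(4:ℝ))) (Ioi R))]
    rw [integral_const_mul, integral_Ioi_rpow_of_lt (by norm_num) hR]
    rw [show (-(4:ℝ) + 1) = -(3:ℝ) by norm_num, Real.rpow_neg hR.le,
      show ((3:ℝ)) = ((3:ℕ):ℝ) by norm_num, Real.rpow_natCast]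
    field_simp
    try simp
  have hI1 : IntegrableOn (fun y => y ^ 2 * (c / max y R ^ 6)) (Ioc (0:ℝ) R) := by
    apply Continuous.integrableOn_Ioc
    exact (continuous_pow 2).mul (continuous_const.div
      ((continuous_id.max continuous_const).pow 6) fun y => pow_ne_zero _ (hmaxpos y).ne')
  have hI2 : IntegrableOn (fun y => y ^ 2 * (c / max y R ^ 6)) (Ioi R) := by
    have hbase : IntegrableOn (fun y : ℝ => c * y ^ (-(4:ℝ))) (Ioi R) volume :=
      (integrableOn_Ioi_rpow_of_lt (show (-(4:ℝ)) < -1 by norm_num) hR).const_mul c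
    refine IntegrableOn.congr_fun hbase (fun y hy => ?_) measurableSet_Ioi
    have hy0 : (0:ℝ) < y := lt_trans hR hy
    show c * y ^ (-(4:ℝ)) = y ^ 2 * (c / max y R ^ 6)
    rw [max_eq_left (le_of_lt hy)]
    rw [Real.rpow_neg hy0.le, show ((4:ℝ)) = ((4:ℕ):ℝ) by norm_num,
      Real.rpow_natCast]
    field_simp
  have hsplit : (∫ y in Ioi (0:ℝ), y ^ 2 * (c / max y R ^ 6)) = 2 * c / (3 * R ^ 3) := by
    rw [← Ioc_union_Ioi_eq_Ioi hR.le,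
      setIntegral_union (Ioc_disjoint_Ioi le_rfl) measurableSet_Ioi hI1 hI2,
      hJ1, hJ2]
    ring
  have hgval : (∫ x : EuclideanSpace ℝ (Fin 3), g x) = 2 * V * (γ ^ 3 * M ^ 6) := by
    rw [hg]
    simp only [smul_eq_mul] at hrad
    rw [hrad, hsplit]
    rw [hc]
    field_simp
    rw [hV, measureReal_def]
    ring
  have hmono := integral_mono_of_nonneg
    (ae_of_all _ fun x : EuclideanSpace ℝ (Fin 3) =>
      pow_nonneg (abs_nonneg ((1 / ‖x‖) * ∫ s in Ioc (-‖x‖) ‖x‖, G s)) 6)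
    hgint (ae_of_all _ hpt)
  calc (∫ x : EuclideanSpace ℝ (Fin 3),
        |(1 / ‖x‖) * ∫ s in Ioc (-‖x‖) ‖x‖, G s| ^ 6) ≤ ∫ x, g x := hmono
    _ = 2 * V * (γ ^ 3 * M ^ 6) := hgval
    _ = 2 * V * γ ^ 3 * M ^ 6 := by ring
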